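/- For any topos Z presented as sheaves on a small site, the canonical functor ε : Z ⟶ Sh(Z) into sheaves on Z with the canonical topology is an equivalence of categories. -/

import Mathlib

open CategoryTheory CategoryTheory.Limits Opposite

universe u

namespace Stmt17Aux

variable {C : Type u} [SmallCategory C] (J : GrothendieckTopology C)

/-- The composite of the Yoneda embedding with sheafification. -/
noncomputable abbrev GG : C ⥤ Sheaf J (Type u) := yoneda ⋙ presheafToSheaf J (Type u)

/-- The adjunction/Yoneda description of maps out of `GG.obj c`. -/
noncomputable def ee {c : C} {X : Sheaf J (Type u)} :
    ((GG J).obj c ⟶ X) ≃ X.val.obj (op c) :=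
  ((sheafificationAdjunction J (Type u)).homEquiv _ _).trans yonedaEquiv

lemma ee_comp {c : C} {X Y : Sheaf J (Type u)} (α : (GG J).obj c ⟶ X) (f : X ⟶ Y) :
    ee J (α ≫ f) = f.hom.app (op c) (ee J α) := by
  dsimp only [ee, GG, Functor.comp_obj, Functor.comp_map, Equiv.trans_apply]
  rw [show (sheafificationAdjunction J (Type u)).homEquiv (yoneda.obj c) Y (α ≫ f)
      = (sheafificationAdjunction J (Type u)).homEquiv (yoneda.obj c) X α ≫ f.hom from
    Adjunction.homEquiv_naturality_right _ _ _]
  exact yonedaEquiv_comp _ _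

lemma ee_symm_comp {c : C} {X Y : Sheaf J (Type u)} (ξ : X.val.obj (op c)) (f : X ⟶ Y) :
    (ee J).symm ξ ≫ f = (ee J).symm (f.hom.app (op c) ξ) := by
  apply (ee J).injective
  rw [ee_comp, Equiv.apply_symm_apply, Equiv.apply_symm_apply]

lemma ee_naturality {c d : C} {X : Sheaf J (Type u)} (α : (GG J).obj c ⟶ X) (g : d ⟶ c) :
    X.val.map g.op (ee J α) = ee J ((GG J).map g ≫ α) := by
  dsimp only [ee, GG, Functor.comp_obj, Functor.comp_map, Equiv.trans_apply]
  rw [show (sheafificationAdjunction J (Type u)).homEquiv (yoneda.obj d) X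
        ((presheafToSheaf J (Type u)).map (yoneda.map g) ≫ α)
      = yoneda.map g ≫ (sheafificationAdjunction J (Type u)).homEquiv (yoneda.obj c) X α from
    Adjunction.homEquiv_naturality_left _ _ _]
  exact yonedaEquiv_naturality _ _

lemma ee_symm_map {c d : C} {X : Sheaf J (Type u)} (ξ : X.val.obj (op c)) (g : d ⟶ c) :
    (ee J).symm (X.val.map g.op ξ) = (GG J).map g ≫ (ee J).symm ξ := by
  apply (ee J).injective
  rw [Equiv.apply_symm_apply, ← ee_naturality, Equiv.apply_symm_apply]

lemma ee_symm_toSheafify {c d : C} (g : d ⟶ c) :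
    (ee J).symm ((toSheafify J (yoneda.obj c)).app (op d) g) = (GG J).map g := by
  apply (ee J).injective
  rw [Equiv.apply_symm_apply]
  dsimp only [ee, GG, Functor.comp_obj, Functor.comp_map, Equiv.trans_apply]
  rw [Adjunction.homEquiv_apply]
  show _ = ((sheafificationAdjunction J (Type u)).unit.app (yoneda.obj d) ≫
      (sheafToPresheaf J (Type u)).map ((presheafToSheaf J (Type u)).map (yoneda.map g))).app
      (op d) (𝟙 d)
  have h3 := types_congr_hom (congr_app (toSheafify_naturality (J := J) (yoneda.map g)) (op d)) (𝟙 d)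
  dsimp at h3 ⊢
  simpa using h3

/-- The sieve of maps `g : d ⟶ c` along which the restriction of `ξ` classifies
a map belonging to `R`. -/
def elSieve {X : Sheaf J (Type u)} (R : Sieve X) {c : C} (ξ : X.val.obj (op c)) : Sieve c where
  arrows d g := R ((ee J).symm (X.val.map g.op ξ))
  downward_closed := by
    intro d d' g hg f
    show R ((ee J).symm (X.val.map (f ≫ g).op ξ))
    have h : X.val.map (f ≫ g).op ξ = X.val.map f.op (X.val.map g.op ξ) := by
      rw [op_comp, FunctorToTypes.map_comp_apply]
    rw [h, ee_symm_map]
    exact R.downward_closed hg _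

/-- A sieve in a sheaf category is "locally covering" if all of its element sieves
are covering. -/
def LocallyCov {X : Sheaf J (Type u)} (R : Sieve X) : Prop :=
  ∀ (c : C) (ξ : X.val.obj (op c)), elSieve J R ξ ∈ J c

lemma locallyCov_pullback {X W : Sheaf J (Type u)} {R : Sieve X} (hR : LocallyCov J R)
    (f : W ⟶ X) : LocallyCov J (R.pullback f) := by
  intro c ξ
  refine J.superset_covering (fun d g hg => ?_) (hR c (f.hom.app (op c) ξ))
  show R ((ee J).symm (W.val.map g.op ξ) ≫ f)
  rw [ee_symm_comp, FunctorToTypes.naturality]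
  exact hg

lemma x_congr {X Y : Sheaf J (Type u)} {R : Presieve X}
    (x : Presieve.FamilyOfElements (yoneda.obj Y) R) {W : Sheaf J (Type u)} {f g : W ⟶ X}
    (h : f = g) (hf : R f) (hg : R g) : x f hf = x g hg := by
  cases h; rfl

lemma isSheafFor_of_locallyCov {X : Sheaf J (Type u)} {R : Sieve X} (hR : LocallyCov J R)
    (Y : Sheaf J (Type u)) :
    Presieve.IsSheafFor (yoneda.obj Y) R.arrows := by
  have hY : Presieve.IsSheaf J Y.val := (isSheaf_iff_isSheaf_of_type J Y.val).1 Y.cond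
  intro x hx
  replace hx := hx.to_sieveCompatible
  -- local families
  let y : ∀ {c : C} (ξ : X.val.obj (op c)),
      Presieve.FamilyOfElements Y.val ((elSieve J R ξ) : Presieve c) :=
    fun {c} ξ d g hg => ee J (x ((ee J).symm (X.val.map g.op ξ)) hg)
  have ycomp : ∀ {c : C} (ξ : X.val.obj (op c)), (y ξ).Compatible := by
    intro c ξ
    rw [Presieve.compatible_iff_sieveCompatible]
    intro d d' f g hf
    show ee J (x ((ee J).symm (X.val.map (g ≫ f).op ξ)) _) =
      Y.val.map g.op (ee J (x ((ee J).symm (X.val.map f.op ξ)) hf))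
    have e1 : (ee J).symm (X.val.map (g ≫ f).op ξ) =
        (GG J).map g ≫ (ee J).symm (X.val.map f.op ξ) := by
      rw [op_comp, FunctorToTypes.map_comp_apply, ee_symm_map]
    have hf' : R ((GG J).map g ≫ (ee J).symm (X.val.map f.op ξ)) := by
      rw [← e1]
      exact (elSieve J R ξ).downward_closed hf g
    rw [ee_naturality]
    refine (congrArg (ee J) (x_congr J x e1 _ hf')).trans ?_
    exact congrArg (ee J) (hx ((ee J).symm (X.val.map f.op ξ)) ((GG J).map g) hf)
  -- pointwise amalgamations
  let t : ∀ {c : C} (ξ : X.val.obj (op c)), Y.val.obj (op c) :=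
    fun {c} ξ => (hY _ (hR c ξ)).amalgamate (y ξ) (ycomp ξ)
  have t_spec : ∀ {c : C} (ξ : X.val.obj (op c)) {d : C} (g : d ⟶ c)
      (hg : elSieve J R ξ g),
      Y.val.map g.op (t ξ) = ee J (x ((ee J).symm (X.val.map g.op ξ)) hg) :=
    fun {c} ξ {d} g hg => (hY _ (hR c ξ)).valid_glue (ycomp ξ) g hg
  have t_map : ∀ {c : C} (ξ : X.val.obj (op c)) {c' : C} (f : c' ⟶ c),
      Y.val.map f.op (t ξ) = t (X.val.map f.op ξ) := by
    intro c ξ c' f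
    apply ((hY _ (hR c' (X.val.map f.op ξ))).isSeparatedFor).ext
    intro d g hg
    have e2 : X.val.map (g ≫ f).op ξ = X.val.map g.op (X.val.map f.op ξ) := by
      rw [op_comp, FunctorToTypes.map_comp_apply]
    have hg' : elSieve J R ξ (g ≫ f) := by
      show R ((ee J).symm (X.val.map (g ≫ f).op ξ))
      rw [e2]; exact hg
    rw [← FunctorToTypes.map_comp_apply, ← op_comp, t_spec ξ (g ≫ f) hg',
      t_spec (X.val.map f.op ξ) g hg]
    exact congrArg (ee J) (x_congr J x (congrArg (ee J).symm e2) _ _)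
  -- the amalgamation
  let htrans : X.val ⟶ Y.val :=
    { app := fun c => TypeCat.ofHom (fun ξ => t (c := c.unop) ξ)
      naturality := fun c c' f => by ext ξ; exact (t_map ξ f.unop).symm }
  let h : X ⟶ Y := ⟨htrans⟩
  refine ⟨h, ?_, ?_⟩
  · intro W g hg
    apply Sheaf.hom_ext
    ext ⟨c⟩ ξw
    show t (g.hom.app (op c) ξw) = (x g hg).hom.app (op c) ξw
    apply ((hY _ (hR c (g.hom.app (op c) ξw))).isSeparatedFor).ext
    intro d a ha
    rw [t_spec (g.hom.app (op c) ξw) a ha]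
    have e3 : (ee J).symm (W.val.map a.op ξw) ≫ g
        = (ee J).symm (X.val.map a.op (g.hom.app (op c) ξw)) := by
      rw [ee_symm_comp, FunctorToTypes.naturality]
    have h4 : R ((ee J).symm (W.val.map a.op ξw) ≫ g) := by rw [e3]; exact ha
    calc ee J (x ((ee J).symm (X.val.map a.op (g.hom.app (op c) ξw))) ha)
        = ee J (x ((ee J).symm (W.val.map a.op ξw) ≫ g) h4) :=
          congrArg (ee J) (x_congr J x e3.symm _ _)
      _ = ee J ((ee J).symm (W.val.map a.op ξw) ≫ x g hg) :=
          congrArg (ee J) (hx g ((ee J).symm (W.val.map a.op ξw)) hg)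
      _ = (x g hg).hom.app (op d) (ee J ((ee J).symm (W.val.map a.op ξw))) :=
          ee_comp J _ _
      _ = (x g hg).hom.app (op d) (W.val.map a.op ξw) := by rw [Equiv.apply_symm_apply]
      _ = Y.val.map a.op ((x g hg).hom.app (op c) ξw) :=
          FunctorToTypes.naturality (x g hg).hom a.op ξw
  · intro h' hh'
    apply Sheaf.hom_ext
    ext ⟨c⟩ ξ
    show h'.hom.app (op c) ξ = t ξ
    apply ((hY _ (hR c ξ)).isSeparatedFor).ext
    intro d a ha
    rw [t_spec ξ a ha]
    calc Y.val.map a.op (h'.hom.app (op c) ξ)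
        = h'.hom.app (op d) (X.val.map a.op ξ) :=
          (FunctorToTypes.naturality h'.hom a.op ξ).symm
      _ = ee J ((ee J).symm (X.val.map a.op ξ) ≫ h') := by
          rw [ee_comp, Equiv.apply_symm_apply]
      _ = ee J (x ((ee J).symm (X.val.map a.op ξ)) ha) :=
          congrArg (ee J) (hh' _ ha)

lemma mem_canonical_of_locallyCov {X : Sheaf J (Type u)} {R : Sieve X}
    (hR : LocallyCov J R) :
    R ∈ Sheaf.canonicalTopology (Sheaf J (Type u)) X := by
  show R ∈ sInf (Sheaf.finestTopologySingle '' Set.range yoneda.obj) X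
  rw [GrothendieckTopology.mem_sInf]
  rintro t ⟨P, ⟨Y, rfl⟩, rfl⟩
  intro W f
  exact isSheafFor_of_locallyCov J (locallyCov_pullback J hR f) Y

instance : (GG J).IsCoverDense (Sheaf.canonicalTopology (Sheaf J (Type u))) := by
  constructor
  intro X
  apply mem_canonical_of_locallyCov
  intro c ξ
  refine J.superset_covering (fun d g _ => ?_) (J.top_mem c)
  exact Presieve.in_coverByImage _ _

lemma restrict_eq {c d d' d'' : C} (ξ : ((GG J).obj c).val.obj (op d)) (g : d' ⟶ d)
    (u : d' ⟶ c)
    (hu : (toSheafify J (yoneda.obj c)).app (op d') u = ((GG J).obj c).val.map g.op ξ)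
    (a : d'' ⟶ d') :
    ((GG J).obj c).val.map (a ≫ g).op ξ
      = (toSheafify J (yoneda.obj c)).app (op d'') (a ≫ u) := by
  rw [op_comp, FunctorToTypes.map_comp_apply, ← hu, ← FunctorToTypes.naturality]
  rfl

lemma restrict_eq' {c d d' d'' : C} (ξ : ((GG J).obj c).val.obj (op d)) (g : d' ⟶ d)
    (u : d' ⟶ c)
    (hu : (toSheafify J (yoneda.obj c)).app (op d') u = ((GG J).obj c).val.map g.op ξ)
    (a : d'' ⟶ d') :
    (ee J).symm (((GG J).obj c).val.map (a ≫ g).op ξ) = (GG J).map (a ≫ u) := by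
  rw [restrict_eq J ξ g u hu a]
  exact ee_symm_toSheafify J (a ≫ u)

lemma pushforward_mem {c : C} {S : Sieve c} (hS : S ∈ J c) :
    S.functorPushforward (GG J)
      ∈ Sheaf.canonicalTopology (Sheaf J (Type u)) ((GG J).obj c) := by
  apply mem_canonical_of_locallyCov
  intro d ξ
  refine J.transitive (Presheaf.imageSieve_mem J (toSheafify J (yoneda.obj c)) ξ) _ ?_
  rintro d' g ⟨u, hu⟩
  refine J.superset_covering (fun d'' a ha => ?_) (J.pullback_stable u hS)
  show (S.functorPushforward (GG J)) ((ee J).symm (((GG J).obj c).val.map (a ≫ g).op ξ))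
  rw [restrict_eq' J ξ g u hu a]
  exact Presieve.image_mem_functorPushforward _ _ ha

instance : (GG J).IsLocallyFull (Sheaf.canonicalTopology (Sheaf J (Type u))) := by
  constructor
  intro c c' f
  apply mem_canonical_of_locallyCov
  intro d ξ
  refine J.transitive (Presheaf.imageSieve_mem J (toSheafify J (yoneda.obj c)) ξ) _ ?_
  rintro d' g ⟨u, hu⟩
  refine J.superset_covering (fun d'' a ha => ?_)
    (Presheaf.imageSieve_mem J (toSheafify J (yoneda.obj c'))
      (ee J ((GG J).map u ≫ f)))
  obtain ⟨l, hl⟩ := ha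
  show ((GG J).imageSieve f).functorPushforward (GG J)
    ((ee J).symm (((GG J).obj c).val.map (a ≫ g).op ξ))
  rw [restrict_eq' J ξ g u hu a]
  refine Presieve.image_mem_functorPushforward _ _ ?_
  refine ⟨l, ?_⟩
  have h5 := congrArg (ee J).symm hl
  have h6 : (GG J).map l = (GG J).map a ≫ (ee J).symm ((ee J) ((GG J).map u ≫ f)) :=
    ((ee_symm_toSheafify J l).symm.trans h5).trans
      (ee_symm_map J ((ee J) ((GG J).map u ≫ f)) a)
  rw [Equiv.symm_apply_apply] at h6
  rw [h6, Functor.map_comp]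
  simp

instance : (GG J).IsLocallyFaithful (Sheaf.canonicalTopology (Sheaf J (Type u))) := by
  constructor
  intro c c' f₁ f₂ hf
  apply mem_canonical_of_locallyCov
  intro d ξ
  refine J.transitive (Presheaf.imageSieve_mem J (toSheafify J (yoneda.obj c)) ξ) _ ?_
  rintro d' g ⟨u, hu⟩
  have heq : (toSheafify J (yoneda.obj c')).app (op d') (u ≫ f₁)
      = (toSheafify J (yoneda.obj c')).app (op d') (u ≫ f₂) := by
    apply (ee J).symm.injective
    rw [ee_symm_toSheafify, ee_symm_toSheafify, Functor.map_comp, Functor.map_comp, hf]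
  refine J.superset_covering (fun d'' a ha => ?_)
    (Presheaf.equalizerSieve_mem J (toSheafify J (yoneda.obj c')) _ _ heq)
  show (Sieve.equalizer f₁ f₂).functorPushforward (GG J)
    ((ee J).symm (((GG J).obj c).val.map (a ≫ g).op ξ))
  rw [restrict_eq' J ξ g u hu a]
  refine Presieve.image_mem_functorPushforward _ _ ?_
  show (a ≫ u) ≫ f₁ = (a ≫ u) ≫ f₂
  have : (yoneda.obj c').map a.op (u ≫ f₁) = (yoneda.obj c').map a.op (u ≫ f₂) := ha
  simpa using this

/-- The canonical topology on the sheaf category. -/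
noncomputable abbrev KK := Sheaf.canonicalTopology (Sheaf J (Type u))

/-- The topology induced on `C` by the canonical topology via `GG`. -/
noncomputable abbrev JJ' : GrothendieckTopology C := (GG J).inducedTopology (KK J)

lemma le_JJ' : J ≤ JJ' J := by
  intro c S hS
  exact (Functor.mem_inducedTopology_iff_of_isCoverDense (G := GG J) (K := KK J) S).2
    (pushforward_mem J hS)

/-- Every `J`-sheaf is canonically a presheaf of maps out of `GG`. -/
noncomputable def presheafIso (X : Sheaf J (Type u)) :
    X.val ≅ (GG J).op ⋙ yoneda.obj X :=
  NatIso.ofComponents (fun c => Equiv.toIso (ee J (c := c.unop) (X := X)).symm)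
    (by
      intro c c' f
      ext ξ
      exact ee_symm_map J ξ f.unop)

lemma isSheafJJ' (X : Sheaf J (Type u)) : Presheaf.IsSheaf (JJ' J) X.val := by
  have h1 : Presheaf.IsSheaf (JJ' J) ((GG J).op ⋙ yoneda.obj X) :=
    (((GG J).sheafPushforwardContinuous (Type u) (JJ' J) (KK J)).obj
      ((KK J).yoneda.obj X)).cond
  rw [isSheaf_iff_isSheaf_of_type] at h1 ⊢
  exact Presieve.isSheaf_iso (JJ' J) (presheafIso J X).symm h1

lemma isSheafJ (P : Sheaf (JJ' J) (Type u)) : Presheaf.IsSheaf J P.val := by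
  have h1 := P.cond
  rw [isSheaf_iff_isSheaf_of_type] at h1 ⊢
  exact Presieve.isSheaf_of_le _ (le_JJ' J) h1

/-- The comparison functor between sheaves for the two topologies on `C`. -/
noncomputable def cmp : Sheaf J (Type u) ⥤ Sheaf (JJ' J) (Type u) where
  obj X := ⟨X.val, isSheafJJ' J X⟩
  map f := ⟨f.hom⟩

/-- The inverse comparison functor. -/
noncomputable def cmpInv : Sheaf (JJ' J) (Type u) ⥤ Sheaf J (Type u) where
  obj P := ⟨P.val, isSheafJ J P⟩
  map f := ⟨f.hom⟩

/-- The comparison equivalence. -/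
noncomputable def cmpEquiv : Sheaf J (Type u) ≌ Sheaf (JJ' J) (Type u) where
  functor := cmp J
  inverse := cmpInv J
  unitIso := NatIso.ofComponents
    (fun X => ⟨⟨𝟙 _⟩, ⟨𝟙 _⟩, by apply Sheaf.hom_ext; simp [cmp, cmpInv],
      by apply Sheaf.hom_ext; simp [cmp, cmpInv]⟩)
    (by intros; apply Sheaf.hom_ext; simp [cmp, cmpInv])
  counitIso := NatIso.ofComponents
    (fun P => ⟨⟨𝟙 _⟩, ⟨𝟙 _⟩, by apply Sheaf.hom_ext; simp [cmp, cmpInv],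
      by apply Sheaf.hom_ext; simp [cmp, cmpInv]⟩)
    (by intros; apply Sheaf.hom_ext; simp [cmp, cmpInv])
  functor_unitIso_comp := by intros; apply Sheaf.hom_ext; simp [cmp, cmpInv]

end Stmt17Aux

open Stmt17Aux in
/-- A Grothendieck topos `Z = Sheaf J Type` is equivalent, via the canonical
functor `ε` (Yoneda followed by sheafification), to the category of sheaves on
`Z` for the canonical topology. -/
theorem stmt17 {C : Type u} [SmallCategory C] (J : GrothendieckTopology C) :
    (GrothendieckTopology.yoneda
        (Sheaf.canonicalTopology (Sheaf J (Type u)))).IsEquivalence := by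
  haveI h1 : ((GG J).sheafPushforwardContinuous (Type u) (JJ' J) (KK J)).IsEquivalence :=
    inferInstance
  haveI h2 : (cmp J).IsEquivalence := (cmpEquiv J).isEquivalence_functor
  have iso : (Sheaf.canonicalTopology (Sheaf J (Type u))).yoneda ⋙
      ((GG J).sheafPushforwardContinuous (Type u) (JJ' J) (KK J)) ≅ cmp J :=
    NatIso.ofComponents
      (fun X => ⟨⟨(presheafIso J X).inv⟩, ⟨(presheafIso J X).hom⟩,
        by apply Sheaf.hom_ext; exact (presheafIso J X).inv_hom_id,
          by apply Sheaf.hom_ext; exact (presheafIso J X).hom_inv_id⟩)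
      (by
        intro X X' f
        apply Sheaf.hom_ext
        ext c (α : (GG J).obj c.unop ⟶ X)
        exact ee_comp J α f)
  haveI h3 : ((Sheaf.canonicalTopology (Sheaf J (Type u))).yoneda ⋙
      ((GG J).sheafPushforwardContinuous (Type u) (JJ' J) (KK J))).IsEquivalence :=
    Functor.isEquivalence_of_iso iso.symm
  exact Functor.isEquivalence_of_comp_right _
    ((GG J).sheafPushforwardContinuous (Type u) (JJ' J) (KK J))
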